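/- There exists a universal constant N such that for every integer n ≥ 0, every complex polynomial P(z) = Σ_{k=0}^{n} c_k z^k, and every p ∈ [1,∞), one has ((1/(n+1)) Σ_{j=0}^{n} |P(e^{2πij/(n+1)})|^p)^{1/p} ≤ N (∫_0^1 |P(e^{2πit})|^p dt)^{1/p}. -/

import Mathlib

open MeasureTheory Complex Finset
open scoped Real BigOperators
open scoped ENNReal NNReal


noncomputable def ee (t : ℝ) : ℂ := Complex.exp (2 * Real.pi * Complex.I * (t : ℂ))

lemma ee_add (s t : ℝ) : ee (s + t) = ee s * ee t := by
  simp [ee, ← Complex.exp_add]; ring_nf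

lemma ee_int (k : ℤ) : ee k = 1 := by
  simp only [ee]
  have : 2 * (Real.pi : ℂ) * Complex.I * ((k : ℝ) : ℂ) = (k : ℤ) * (2 * Real.pi * Complex.I) := by
    push_cast; ring
  rw [this, Complex.exp_int_mul_two_pi_mul_I]

lemma abs_ee (t : ℝ) : ‖ee t‖ = 1 := by
  simp [ee, Complex.norm_exp]

lemma ee_nat_mul (k : ℕ) (t : ℝ) : ee (k * t) = ee t ^ k := by
  rw [ee, ee, ← Complex.exp_nat_mul]
  push_cast; ring_nf

lemma ee_int_mul (k : ℤ) (t : ℝ) : ee (k * t) = ee t ^ k := by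
  rw [ee, ee, ← Complex.exp_int_mul]
  push_cast; ring_nf

lemma continuous_ee : Continuous ee := by
  unfold ee; fun_prop

lemma ee_eq_one_iff (x : ℝ) : ee x = 1 ↔ ∃ k : ℤ, x = k := by
  rw [ee, Complex.exp_eq_one_iff]
  constructor
  · rintro ⟨k, hk⟩
    refine ⟨k, ?_⟩
    have h2 : (2 * Real.pi * Complex.I : ℂ) ≠ 0 := by
      simp [Real.pi_ne_zero, Complex.I_ne_zero]
    have : (x : ℂ) = (k : ℂ) := by
      have hx : (x : ℂ) * (2 * Real.pi * Complex.I) = (k : ℂ) * (2 * Real.pi * Complex.I) := by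
        linear_combination hk
      exact mul_right_cancel₀ h2 hx
    exact_mod_cast this
  · rintro ⟨k, rfl⟩
    exact ⟨k, by push_cast; ring⟩

lemma integral_ee (k : ℤ) :
    (∫ t in Set.Ioc (0:ℝ) 1, ee (k * t)) = if k = 0 then 1 else 0 := by
  rw [← intervalIntegral.integral_of_le (by norm_num : (0:ℝ) ≤ 1)]
  by_cases hk : k = 0
  · simp [hk, ee]
  · have hc : (2 * Real.pi * Complex.I * k : ℂ) ≠ 0 := by
      simp [Real.pi_ne_zero, Complex.I_ne_zero, hk]
    have : ∀ t : ℝ, ee (k * t) = Complex.exp ((2 * Real.pi * Complex.I * k) * t) := by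
      intro t; rw [ee]; push_cast; ring_nf
    simp only [this]
    rw [integral_exp_mul_complex hc]
    have h1 : Complex.exp (2 * Real.pi * Complex.I * k * (1:ℝ)) = 1 := by
      have := ee_int k
      rw [ee] at this
      push_cast
      rw [mul_one]
      convert this using 2; norm_cast
    have h0 : Complex.exp (2 * Real.pi * Complex.I * k * (0:ℝ)) = 1 := by
      push_cast; rw [mul_zero, Complex.exp_zero]
    rw [h1, h0]
    simp [hk]

lemma sum_sample (m : ℕ) (hm : 0 < m) (k : ℤ) :
    (∑ j ∈ Finset.range m, ee (k * ((j : ℝ) / m))) =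
      if (m : ℤ) ∣ k then (m : ℂ) else 0 := by
  have hstep : ∀ j : ℕ, ee (k * ((j : ℝ) / m)) = (ee ((k : ℝ) / m)) ^ j := by
    intro j
    rw [← ee_nat_mul]
    congr 1
    push_cast
    ring
  simp only [hstep]
  by_cases hd : (m : ℤ) ∣ k
  · obtain ⟨c, rfl⟩ := hd
    have : ee ((((m : ℤ) * c : ℤ) : ℝ) / m) = 1 := by
      have : ((((m : ℤ) * c : ℤ) : ℝ) / m) = ((c : ℤ) : ℝ) := by
        push_cast
        field_simp
      rw [this, ee_int]
    simp only [this, one_pow, Finset.sum_const, Finset.card_range, nsmul_eq_mul, mul_one]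
    simp [hm.ne']
  · have hne : ee ((k : ℝ) / m) ≠ 1 := by
      rw [Ne, ee_eq_one_iff]
      rintro ⟨c, hc⟩
      apply hd
      have : (k : ℝ) = (c : ℝ) * m := by
        field_simp at hc
        linarith [hc]
      have : k = c * m := by exact_mod_cast this
      exact ⟨c, by linarith [this]⟩
    rw [geom_sum_eq hne]
    have : ee ((k : ℝ) / m) ^ m = 1 := by
      rw [← ee_nat_mul]
      have : (m : ℝ) * ((k : ℝ) / m) = ((k : ℤ) : ℝ) := by
        field_simp
      rw [this, ee_int]
    rw [this]
    simp [hd]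

noncomputable def Dk (M : ℕ) (t : ℝ) : ℂ := ∑ a ∈ Finset.range M, ee (a * t)

noncomputable def Kk (M : ℕ) (t : ℝ) : ℝ := Complex.normSq (Dk M t) / M

lemma Kk_nonneg (M : ℕ) (t : ℝ) : 0 ≤ Kk M t := by
  unfold Kk
  apply div_nonneg (Complex.normSq_nonneg _) (Nat.cast_nonneg _)

lemma continuous_Kk (M : ℕ) : Continuous (Kk M) := by
  unfold Kk Dk
  apply Continuous.div_const
  apply Complex.continuous_normSq.comp
  apply continuous_finset_sum
  intro a _
  exact continuous_ee.comp (by fun_prop)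

lemma Kk_expand (M : ℕ) (t : ℝ) :
    ((Kk M t : ℝ) : ℂ) =
      (∑ a ∈ Finset.range M, ∑ b ∈ Finset.range M, ee (((a : ℤ) - (b : ℤ)) * t)) / M := by
  unfold Kk Dk
  push_cast
  rw [← Complex.mul_conj]
  congr 1
  rw [map_sum, Finset.sum_mul_sum]
  apply Finset.sum_congr rfl
  intro a _
  apply Finset.sum_congr rfl
  intro b _
  have hconj : (starRingEnd ℂ) (ee (b * t)) = ee (-(b * t)) := by
    rw [ee, ee, ← Complex.exp_conj]
    congr 1
    simp only [map_mul, Complex.conj_I, Complex.conj_ofReal, map_ofNat]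
    push_cast
    ring
  rw [hconj, ← ee_add]
  congr 1
  push_cast
  ring

lemma integrable_ee_mul (c : ℂ) (l : ℤ) :
    IntegrableOn (fun t : ℝ => c * ee (l * t)) (Set.Ioc (0:ℝ) 1) := by
  apply Continuous.integrableOn_Ioc
  exact continuous_const.mul (continuous_ee.comp (by fun_prop))

lemma integral_K_mul (M : ℕ) (hM : 0 < M) (k : ℕ) (θ : ℝ) :
    (∫ t in Set.Ioc (0:ℝ) 1, ee (k * t) * ((Kk M (θ - t) : ℝ) : ℂ))
      = (((M - k : ℕ) : ℂ) / M) * ee (k * θ) := by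
  have hexp : ∀ t : ℝ, ee (k * t) * ((Kk M (θ - t) : ℝ) : ℂ)
      = (∑ a ∈ Finset.range M, ∑ b ∈ Finset.range M,
          ee ((((a:ℤ) - b : ℤ) : ℝ) * θ) * ee ((((k : ℤ) - ((a:ℤ) - b) : ℤ) : ℝ) * t)) / M := by
    intro t
    rw [Kk_expand, ← mul_div_assoc]
    congr 1
    rw [Finset.mul_sum]
    refine Finset.sum_congr rfl fun a _ => ?_
    rw [Finset.mul_sum]
    refine Finset.sum_congr rfl fun b _ => ?_
    rw [← ee_add, ← ee_add]
    congr 1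
    push_cast
    ring
  simp only [hexp]
  rw [integral_div]
  rw [MeasureTheory.integral_finset_sum _ (fun a _ => ?_)]
  swap
  · apply MeasureTheory.integrable_finset_sum
    intro b _
    exact integrable_ee_mul _ _
  have hswap : ∀ a ∈ Finset.range M,
      (∫ t in Set.Ioc (0:ℝ) 1, ∑ b ∈ Finset.range M,
          ee ((((a:ℤ) - b : ℤ) : ℝ) * θ) * ee ((((k : ℤ) - ((a:ℤ) - b) : ℤ) : ℝ) * t))
      = ∑ b ∈ Finset.range M, (if a = b + k then ee ((k:ℝ) * θ) else 0) := by
    intro a _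
    rw [MeasureTheory.integral_finset_sum _ (fun b _ => integrable_ee_mul _ _)]
    refine Finset.sum_congr rfl fun b _ => ?_
    rw [MeasureTheory.integral_const_mul, integral_ee]
    by_cases h : a = b + k
    · have h1 : ((k:ℤ) - ((a:ℤ) - b)) = 0 := by omega
      have h2 : ((((a:ℤ) - b : ℤ)) : ℝ) * θ = (k : ℝ) * θ := by
        have : (a:ℤ) - b = k := by omega
        rw [this]; push_cast; ring
      simp [h, h1, h2]
    · have h1 : ((k:ℤ) - ((a:ℤ) - b)) ≠ 0 := by omega
      simp [h, h1]
  rw [Finset.sum_congr rfl hswap]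
  rw [Finset.sum_comm]
  have hinner : ∀ b : ℕ, (∑ a ∈ Finset.range M, if a = b + k then ee ((k:ℝ) * θ) else 0)
      = (if b + k < M then ee ((k:ℝ) * θ) else 0) := by
    intro b
    rw [Finset.sum_ite_eq' (Finset.range M) (b + k) (fun _ => ee ((k:ℝ) * θ))]
    simp [Finset.mem_range]
  rw [Finset.sum_congr rfl (fun b _ => hinner b)]
  rw [← Finset.sum_filter]
  have hfilt : (Finset.range M).filter (fun b => b + k < M) = Finset.range (M - k) := by
    ext b
    simp only [Finset.mem_filter, Finset.mem_range]
    omega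
  rw [hfilt, Finset.sum_const, Finset.card_range, nsmul_eq_mul]
  field_simp

lemma continuous_eeK (M : ℕ) (k : ℕ) (θ : ℝ) :
    Continuous (fun t : ℝ => ee ((k:ℝ) * t) * ((Kk M (θ - t) : ℝ) : ℂ)) := by
  apply Continuous.mul
  · exact continuous_ee.comp (by fun_prop)
  · exact Complex.continuous_ofReal.comp ((continuous_Kk M).comp (by fun_prop))

lemma integrable_eeK (M : ℕ) (k : ℕ) (θ : ℝ) :
    IntegrableOn (fun t : ℝ => ee ((k:ℝ) * t) * ((Kk M (θ - t) : ℝ) : ℂ)) (Set.Ioc (0:ℝ) 1) :=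
  (continuous_eeK M k θ).integrableOn_Ioc

lemma repro (n : ℕ) (P : Polynomial ℂ) (hP : P.natDegree ≤ n) (θ : ℝ) :
    P.eval (ee θ)
      = ∫ t in Set.Ioc (0:ℝ) 1, P.eval (ee t) *
          (2 * ((Kk (2*(n+1)) (θ - t) : ℝ) : ℂ) - ((Kk (n+1) (θ - t) : ℝ) : ℂ)) := by
  set m := n + 1 with hm
  have hev : ∀ x : ℂ, P.eval x = ∑ k ∈ Finset.range m, P.coeff k * x ^ k := fun x =>
    Polynomial.eval_eq_sum_range' (lt_of_le_of_lt hP (by omega)) x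
  have hexp : ∀ t : ℝ, P.eval (ee t) *
          (2 * ((Kk (2*m) (θ - t) : ℝ) : ℂ) - ((Kk m (θ - t) : ℝ) : ℂ))
      = ∑ k ∈ Finset.range m, P.coeff k *
          (2 * (ee ((k:ℝ) * t) * ((Kk (2*m) (θ - t) : ℝ) : ℂ))
            - (ee ((k:ℝ) * t) * ((Kk m (θ - t) : ℝ) : ℂ))) := by
    intro t
    rw [hev (ee t), Finset.sum_mul]
    refine Finset.sum_congr rfl fun k _ => ?_
    rw [← ee_nat_mul]
    ring
  simp only [hexp]
  rw [MeasureTheory.integral_finset_sum _ (fun k _ => ?_)]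
  swap
  · apply Integrable.const_mul
    exact ((integrable_eeK (2*m) k θ).const_mul 2).sub (integrable_eeK m k θ)
  rw [hev (ee θ)]
  refine (Finset.sum_congr rfl fun k hk => ?_).symm
  rw [MeasureTheory.integral_const_mul,
    MeasureTheory.integral_sub ((integrable_eeK (2*m) k θ).const_mul 2) (integrable_eeK m k θ),
    MeasureTheory.integral_const_mul, integral_K_mul _ (by omega) k θ,
    integral_K_mul _ (by omega) k θ]
  have hk' : k ≤ m := by
    have := Finset.mem_range.mp hk; omega
  have hcoef : 2 * ((((2*m - k : ℕ) : ℂ)) / ((2*m : ℕ) : ℂ)) - (((m - k : ℕ) : ℂ)) / ((m:ℕ) : ℂ) = 1 := by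
    have h1 : ((2*m - k : ℕ) : ℂ) = 2*(m:ℂ) - (k:ℂ) := by
      push_cast [Nat.cast_sub (by omega : k ≤ 2*m)]; ring
    have h2 : ((m - k : ℕ) : ℂ) = (m:ℂ) - (k:ℂ) := by
      push_cast [Nat.cast_sub hk']; ring
    have hm0 : ((m:ℕ) : ℂ) ≠ 0 := by
      exact Nat.cast_ne_zero.mpr (by omega)
    rw [h1, h2]
    have h2m : ((2*m : ℕ) : ℂ) = 2*(m:ℂ) := by push_cast; ring
    rw [h2m]
    field_simp
    ring
  have : ee ((k:ℝ) * θ) = ee θ ^ k := ee_nat_mul k θ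
  rw [this] at *
  rw [mul_comm 2 ((((2*m - k : ℕ) : ℂ)) / ((2*m : ℕ) : ℂ) * (ee θ ^ k))]
  calc P.coeff k * ((((2*m - k:ℕ):ℂ) / ((2*m:ℕ):ℂ) * ee θ ^ k) * 2 - ((m - k:ℕ):ℂ) / ((m:ℕ):ℂ) * ee θ ^ k)
      = P.coeff k * ee θ ^ k * (2 * ((((2*m - k : ℕ) : ℂ)) / ((2*m : ℕ) : ℂ)) - (((m - k : ℕ) : ℂ)) / ((m:ℕ) : ℂ)) := by ring
    _ = P.coeff k * ee θ ^ k := by rw [hcoef, mul_one]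

lemma ee_zero : ee 0 = 1 := by simp [ee]

lemma integral_Kk (M : ℕ) (hM : 0 < M) (θ : ℝ) :
    (∫ t in Set.Ioc (0:ℝ) 1, Kk M (θ - t)) = 1 := by
  have h := integral_K_mul M hM 0 θ
  have h0 : ∀ t : ℝ, ee ((0:ℕ) * t) = 1 := by
    intro t; rw [Nat.cast_zero, zero_mul, ee_zero]
  simp only [Nat.cast_zero, zero_mul, ee_zero, one_mul, Nat.sub_zero] at h
  have h2 : ((∫ t in Set.Ioc (0:ℝ) 1, Kk M (θ - t) : ℝ) : ℂ) = ((M:ℕ):ℂ)/((M:ℕ):ℂ) * 1 := by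
    rw [← h]
    exact integral_ofReal.symm
  have hM' : ((M:ℕ):ℂ) ≠ 0 := Nat.cast_ne_zero.mpr hM.ne'
  rw [div_self hM', one_mul] at h2
  exact_mod_cast h2

lemma memLp_cont (f : ℝ → ℝ) (hf : Continuous f) (r : ℝ≥0∞) :
    MemLp f r (volume.restrict (Set.Ioc (0:ℝ) 1)) := by
  haveI : IsFiniteMeasure (volume.restrict (Set.Ioc (0:ℝ) 1)) :=
    ⟨by rw [Measure.restrict_apply_univ]; simp⟩
  obtain ⟨C, hC⟩ := (isCompact_Icc : IsCompact (Set.Icc (0:ℝ) 1)).exists_bound_of_continuousOn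
    hf.continuousOn
  have htop : MemLp f ⊤ (volume.restrict (Set.Ioc (0:ℝ) 1)) := by
    apply memLp_top_of_bound hf.aestronglyMeasurable C
    rw [ae_restrict_iff' measurableSet_Ioc]
    filter_upwards with x hx
    exact hC x (Set.Ioc_subset_Icc_self hx)
  exact htop.mono_exponent le_top

lemma card_filter_dvd (m M : ℕ) (hm : 0 < m) (c : ℤ) :
    ((Finset.range M).filter (fun x : ℕ => (m:ℤ) ∣ c - (x:ℤ))).card ≤ M / m + 1 := by
  have : ((Finset.range M).filter (fun x : ℕ => (m:ℤ) ∣ c - (x:ℤ))).card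
      ≤ (Finset.range (M / m + 1)).card := by
    apply Finset.card_le_card_of_injOn (fun x => x / m)
    · intro x hx
      simp only [Finset.coe_filter, Finset.mem_coe, Set.mem_setOf_eq, Finset.mem_filter, Finset.mem_range] at hx ⊢
      have : x / m ≤ M / m := Nat.div_le_div_right (le_of_lt hx.1)
      omega
    · intro x1 h1 x2 h2 hq
      simp only [Finset.coe_filter, Set.mem_setOf_eq, Finset.mem_range] at h1 h2
      have hdvd : (m:ℤ) ∣ (x1:ℤ) - (x2:ℤ) := by
        have := dvd_sub h2.2 h1.2
        simpa using this
      have hmod : x1 % m = x2 % m := by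
        have hz : (x1:ℤ) % m = (x2:ℤ) % m := Int.ModEq.symm (Int.modEq_iff_dvd.mpr (by simpa using hdvd))
        exact_mod_cast hz
      have d1 := Nat.div_add_mod x1 m
      have d2 := Nat.div_add_mod x2 m
      have hq' : x1 / m = x2 / m := by exact hq
      rw [hq'] at d1
      omega
  simpa using this

lemma sum_Kk_le (m M : ℕ) (hm : 0 < m) (hM : 0 < M) (t : ℝ) :
    (∑ j ∈ Finset.range m, Kk M ((j:ℝ)/m - t)) ≤ (m:ℝ) * (M / m + 1 : ℕ) := by
  set S : ℝ := ∑ j ∈ Finset.range m, Kk M ((j:ℝ)/m - t) with hSdef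
  have hSnn : 0 ≤ S := Finset.sum_nonneg fun j _ => Kk_nonneg _ _
  have hS : ((S : ℝ) : ℂ) = (∑ a ∈ Finset.range M, ∑ b ∈ Finset.range M,
      (if (m:ℤ) ∣ ((a:ℤ) - b) then (m:ℂ) else 0) * ee (-((((a:ℤ) - b : ℤ)):ℝ) * t)) / M := by
    rw [hSdef]
    push_cast [Kk_expand]
    rw [← Finset.sum_div]
    congr 1
    rw [Finset.sum_comm]
    refine Finset.sum_congr rfl fun a _ => ?_
    rw [Finset.sum_comm]
    refine Finset.sum_congr rfl fun b _ => ?_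
    have hss := sum_sample m hm ((a:ℤ) - b)
    push_cast at hss ⊢
    rw [← hss, Finset.sum_mul]
    refine Finset.sum_congr rfl fun j _ => ?_
    rw [← ee_add]
    congr 1
    ring
  have habs : S = ‖((S:ℝ):ℂ)‖ := by
    rw [Complex.norm_real, Real.norm_eq_abs, _root_.abs_of_nonneg hSnn]
  rw [habs, hS]
  rw [norm_div]
  have hMabs : ‖((M:ℕ):ℂ)‖ = (M:ℝ) := by
    rw [Complex.norm_natCast]
  rw [hMabs]
  rw [div_le_iff₀ (by positivity)]
  calc ‖∑ a ∈ Finset.range M, ∑ b ∈ Finset.range M,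
        (if (m:ℤ) ∣ ((a:ℤ) - b) then (m:ℂ) else 0) * ee (-((((a:ℤ) - b : ℤ)):ℝ) * t)‖
      ≤ ∑ a ∈ Finset.range M, ∑ b ∈ Finset.range M,
        ‖(if (m:ℤ) ∣ ((a:ℤ) - b) then (m:ℂ) else 0) * ee (-((((a:ℤ) - b : ℤ)):ℝ) * t)‖ := by
        refine (norm_sum_le _ _).trans ?_
        exact Finset.sum_le_sum fun a _ => norm_sum_le _ _
    _ ≤ ∑ a ∈ Finset.range M, ∑ b ∈ Finset.range M,
        (if (m:ℤ) ∣ ((a:ℤ) - b) then (m:ℝ) else 0) := by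
        refine Finset.sum_le_sum fun a _ => Finset.sum_le_sum fun b _ => ?_
        rw [norm_mul]
        have : ‖ee (-((((a:ℤ) - b : ℤ)):ℝ) * t)‖ = 1 := by
          rw [abs_ee]
        rw [this, mul_one]
        by_cases h : (m:ℤ) ∣ ((a:ℤ) - b) <;> simp [h]
    _ ≤ ∑ a ∈ Finset.range M, ((M / m + 1 : ℕ) : ℝ) * m := by
        refine Finset.sum_le_sum fun a _ => ?_
        rw [← Finset.sum_filter]
        rw [Finset.sum_const, nsmul_eq_mul]
        have := card_filter_dvd m M hm (a:ℤ)
        have hcard : (((Finset.range M).filter (fun x : ℕ => (m:ℤ) ∣ (a:ℤ) - (x:ℤ))).card : ℝ)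
            ≤ ((M / m + 1 : ℕ) : ℝ) := by exact_mod_cast this
        apply mul_le_mul_of_nonneg_right hcard (Nat.cast_nonneg m)
    _ = (M:ℝ) * (((M / m + 1 : ℕ) : ℝ) * m) := by
        rw [Finset.sum_const, Finset.card_range, nsmul_eq_mul]
    _ = (m:ℝ) * ((M / m + 1 : ℕ) : ℝ) * M := by ring

lemma continuous_evalP (P : Polynomial ℂ) : Continuous (fun t : ℝ => P.eval (ee t)) :=
  P.continuous.comp continuous_ee

lemma pointwise_bound (n : ℕ) (P : Polynomial ℂ) (hP : P.natDegree ≤ n) (θ : ℝ) :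
    ‖P.eval (ee θ)‖ ≤ ∫ t in Set.Ioc (0:ℝ) 1,
      ‖P.eval (ee t)‖ * (2 * Kk (2*(n+1)) (θ - t) + Kk (n+1) (θ - t)) := by
  rw [repro n P hP θ]
  refine (norm_integral_le_integral_norm _).trans ?_
  apply MeasureTheory.integral_mono
  · apply Continuous.integrableOn_Ioc
    apply Continuous.norm
    apply (continuous_evalP P).mul
    apply Continuous.sub
    · exact continuous_const.mul (Complex.continuous_ofReal.comp
        ((continuous_Kk _).comp (by fun_prop)))
    · exact Complex.continuous_ofReal.comp ((continuous_Kk _).comp (by fun_prop))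
  · apply Continuous.integrableOn_Ioc
    apply Continuous.mul
    · exact (continuous_norm.comp (continuous_evalP P))
    · apply Continuous.add
      · exact continuous_const.mul ((continuous_Kk _).comp (by fun_prop))
      · exact (continuous_Kk _).comp (by fun_prop)
  · intro t
    show ‖P.eval (ee t) * (2 * ((Kk (2*(n+1)) (θ - t) : ℝ) : ℂ) - ((Kk (n+1) (θ - t) : ℝ) : ℂ))‖
      ≤ ‖P.eval (ee t)‖ * (2 * Kk (2*(n+1)) (θ - t) + Kk (n+1) (θ - t))
    rw [norm_mul]
    apply mul_le_mul_of_nonneg_left _ (norm_nonneg _)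
    have hcast : (2 * ((Kk (2*(n+1)) (θ - t) : ℝ) : ℂ) - ((Kk (n+1) (θ - t) : ℝ) : ℂ))
        = (((2 * Kk (2*(n+1)) (θ - t) - Kk (n+1) (θ - t) : ℝ)) : ℂ) := by
      push_cast; ring
    rw [hcast, Complex.norm_real, Real.norm_eq_abs]
    have h1 := Kk_nonneg (2*(n+1)) (θ - t)
    have h2 := Kk_nonneg (n+1) (θ - t)
    rw [abs_le]
    constructor <;> nlinarith

lemma jensen_step (m : ℕ) (hm : 0 < m) (g : ℝ → ℝ) (hgc : Continuous g)
    (hgnn : ∀ t, 0 ≤ g t) (p : ℝ) (hp : 1 ≤ p) (θ : ℝ)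
    (hbound : g θ ≤ ∫ t in Set.Ioc (0:ℝ) 1, g t * (2 * Kk (2*m) (θ - t) + Kk m (θ - t))) :
    g θ ^ p ≤ 3 ^ (p - 1) *
      ∫ t in Set.Ioc (0:ℝ) 1, g t ^ p * (2 * Kk (2*m) (θ - t) + Kk m (θ - t)) := by
  set W : ℝ → ℝ := fun t => 2 * Kk (2*m) (θ - t) + Kk m (θ - t) with hW
  have hWc : Continuous W := by
    apply Continuous.add
    · exact continuous_const.mul ((continuous_Kk _).comp (by fun_prop))
    · exact (continuous_Kk _).comp (by fun_prop)
  have hWnn : ∀ t, 0 ≤ W t := fun t => by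
    have h1 := Kk_nonneg (2*m) (θ - t); have h2 := Kk_nonneg m (θ - t)
    simp only [hW]; linarith
  have hc2m : Continuous (fun t : ℝ => 2 * Kk (2*m) (θ - t)) :=
    continuous_const.mul ((continuous_Kk _).comp (continuous_const.sub continuous_id))
  have hcm : Continuous (fun t : ℝ => Kk m (θ - t)) :=
    (continuous_Kk _).comp (continuous_const.sub continuous_id)
  have hWint : (∫ t in Set.Ioc (0:ℝ) 1, W t) = 3 := by
    simp only [hW]
    rw [MeasureTheory.integral_add hc2m.integrableOn_Ioc hcm.integrableOn_Ioc,
      MeasureTheory.integral_const_mul, integral_Kk _ (by omega) θ, integral_Kk _ hm θ]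
    norm_num
  set X : ℝ := ∫ t in Set.Ioc (0:ℝ) 1, g t ^ p * W t with hX
  have hXnn : 0 ≤ X := by
    apply MeasureTheory.integral_nonneg
    intro t
    exact mul_nonneg (Real.rpow_nonneg (hgnn t) p) (hWnn t)
  rcases eq_or_lt_of_le hp with hp1 | hp1
  · subst hp1
    rw [hX]
    simp only [sub_self, Real.rpow_zero, one_mul]
    have heq : (∫ t in Set.Ioc (0:ℝ) 1, g t ^ (1:ℝ) * W t) = ∫ t in Set.Ioc (0:ℝ) 1, g t * W t := by
      refine MeasureTheory.integral_congr_ae (Filter.Eventually.of_forall fun t => ?_)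
      show g t ^ (1:ℝ) * W t = g t * W t
      rw [Real.rpow_one]
    calc g θ ^ (1:ℝ) = g θ := Real.rpow_one _
      _ ≤ ∫ t in Set.Ioc (0:ℝ) 1, g t * W t := hbound
      _ = ∫ t in Set.Ioc (0:ℝ) 1, g t ^ (1:ℝ) * W t := heq.symm
  · -- 1 < p
    have hp0 : 0 < p := lt_trans zero_lt_one hp1
    set q : ℝ := Real.conjExponent p with hq
    have hpq : p.HolderConjugate q := Real.HolderConjugate.conjExponent hp1
    have hWp : Continuous (fun t => W t ^ (1/p)) :=
      hWc.rpow_const fun x => Or.inr (one_div_nonneg.mpr hp0.le)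
    have hWq : Continuous (fun t => W t ^ (1/q)) :=
      hWc.rpow_const fun x => Or.inr (one_div_nonneg.mpr hpq.symm.nonneg)
    have hholder := MeasureTheory.integral_mul_le_Lp_mul_Lq_of_nonneg hpq
      (μ := volume.restrict (Set.Ioc (0:ℝ) 1))
      (f := fun t => g t * W t ^ (1/p)) (g := fun t => W t ^ (1/q))
      (Filter.Eventually.of_forall fun t =>
        mul_nonneg (hgnn t) (Real.rpow_nonneg (hWnn t) _))
      (Filter.Eventually.of_forall fun t => Real.rpow_nonneg (hWnn t) _)
      (memLp_cont _ (hgc.mul hWp) _) (memLp_cont _ hWq _)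
    have he1 : (∫ t in Set.Ioc (0:ℝ) 1, (g t * W t ^ (1/p)) * (W t ^ (1/q)))
        = ∫ t in Set.Ioc (0:ℝ) 1, g t * W t := by
      refine MeasureTheory.integral_congr_ae (Filter.Eventually.of_forall fun t => ?_)
      show g t * W t ^ (1/p) * W t ^ (1/q) = g t * W t
      have hsum : 1/p + 1/q = 1 := by
        rw [one_div, one_div]; exact hpq.inv_add_inv_eq_one
      rw [mul_assoc, ← Real.rpow_add' (hWnn t) (by rw [hsum]; norm_num), hsum, Real.rpow_one]
    have he2 : (∫ t in Set.Ioc (0:ℝ) 1, (g t * W t ^ (1/p)) ^ p) = X := by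
      rw [hX]
      refine MeasureTheory.integral_congr_ae (Filter.Eventually.of_forall fun t => ?_)
      show (g t * W t ^ (1/p)) ^ p = g t ^ p * W t
      rw [Real.mul_rpow (hgnn t) (Real.rpow_nonneg (hWnn t) _),
        ← Real.rpow_mul (hWnn t), one_div_mul_cancel hp0.ne', Real.rpow_one]
    have he3 : (∫ t in Set.Ioc (0:ℝ) 1, (W t ^ (1/q)) ^ q) = 3 := by
      rw [← hWint]
      refine MeasureTheory.integral_congr_ae (Filter.Eventually.of_forall fun t => ?_)
      show (W t ^ (1/q)) ^ q = W t
      rw [← Real.rpow_mul (hWnn t), one_div_mul_cancel hpq.symm.ne_zero, Real.rpow_one]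
    rw [he1, he2, he3] at hholder
    have hmain : g θ ≤ X ^ (1/p) * 3 ^ (1/q) := le_trans hbound hholder
    have hfinal := Real.rpow_le_rpow (hgnn θ) hmain (le_of_lt hp0)
    calc g θ ^ p ≤ (X ^ (1/p) * 3 ^ (1/q)) ^ p := hfinal
      _ = X * 3 ^ (p - 1) := by
          rw [Real.mul_rpow (Real.rpow_nonneg hXnn _) (Real.rpow_nonneg (by norm_num) _),
            ← Real.rpow_mul hXnn, one_div_mul_cancel hp0.ne', Real.rpow_one,
            ← Real.rpow_mul (by norm_num : (0:ℝ) ≤ 3)]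
          congr 1
          rw [one_div, inv_mul_eq_div, hpq.div_conj_eq_sub_one]
      _ = 3 ^ (p - 1) * X := mul_comm _ _


/-- **Marcinkiewicz–Zygmund inequality, forward direction.**
There is a universal constant `N` such that for every `n ≥ 0`, every complex polynomial
`P` of degree at most `n`, and every `p ∈ [1,∞)`, the normalized `ℓ^p` average of `P` over the
`(n+1)`-st roots of unity is bounded by `N` times the `L^p` norm of `t ↦ P(e^{2πit})` on `[0,1]`. -/
theorem marcinkiewicz_zygmund_forward :
    ∃ N : ℝ, 0 < N ∧
      ∀ (n : ℕ) (P : Polynomial ℂ), P.natDegree ≤ n →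
        ∀ p : ℝ, 1 ≤ p →
          ((1/((n:ℝ)+1)) * ∑ j ∈ Finset.range (n+1),
              ‖P.eval (Complex.exp (2 * Real.pi * Complex.I * (j:ℂ) / ((n:ℂ)+1)))‖ ^ p)
            ^ (1/p)
          ≤ N * (∫ t in Set.Ioc (0:ℝ) 1,
              ‖P.eval (Complex.exp (2 * Real.pi * Complex.I * (t:ℂ)))‖ ^ p) ^ (1/p) := by
  refine ⟨24, by norm_num, fun n P hP p hp => ?_⟩
  have hp0 : 0 < p := lt_of_lt_of_le zero_lt_one hp
  set g : ℝ → ℝ := fun t => ‖P.eval (ee t)‖ with hg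
  have hgc : Continuous g := continuous_norm.comp (continuous_evalP P)
  have hgnn : ∀ t, 0 ≤ g t := fun t => norm_nonneg _
  set m : ℕ := n + 1 with hm
  have hmpos : (0:ℕ) < m := by omega
  have hmR : (0:ℝ) < (m:ℝ) := by exact_mod_cast hmpos
  -- identify nodes
  have hnode : ∀ j : ℕ,
      Complex.exp (2 * Real.pi * Complex.I * (j:ℂ) / ((n:ℂ)+1)) = ee ((j:ℝ)/m) := by
    intro j
    rw [ee]
    congr 1
    have hne : ((n:ℂ)+1) ≠ 0 := by
      have : ((m:ℕ):ℂ) ≠ 0 := Nat.cast_ne_zero.mpr hmpos.ne'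
      rw [hm] at this; push_cast at this ⊢; exact this
    rw [hm]; push_cast; ring
  have hsum_eq : (∑ j ∈ Finset.range (n+1),
      ‖P.eval (Complex.exp (2 * Real.pi * Complex.I * (j:ℂ) / ((n:ℂ)+1)))‖ ^ p)
      = ∑ j ∈ Finset.range m, g ((j:ℝ)/m) ^ p := by
    refine Finset.sum_congr rfl fun j _ => ?_
    rw [hnode j, hg]
  have hI_eq : (∫ t in Set.Ioc (0:ℝ) 1,
      ‖P.eval (Complex.exp (2 * Real.pi * Complex.I * (t:ℂ)))‖ ^ p)
      = ∫ t in Set.Ioc (0:ℝ) 1, g t ^ p := rfl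
  rw [hsum_eq, hI_eq]
  set I : ℝ := ∫ t in Set.Ioc (0:ℝ) 1, g t ^ p with hI
  have hgp : Continuous (fun t => g t ^ p) :=
    hgc.rpow_const fun x => Or.inr hp0.le
  have hInn : 0 ≤ I := MeasureTheory.integral_nonneg fun t => Real.rpow_nonneg (hgnn t) p
  -- Jensen step for each node
  have hjen : ∀ j ∈ Finset.range m, g ((j:ℝ)/m) ^ p ≤ 3 ^ (p-1) *
      ∫ t in Set.Ioc (0:ℝ) 1, g t ^ p * (2 * Kk (2*m) ((j:ℝ)/m - t) + Kk m ((j:ℝ)/m - t)) := by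
    intro j _
    refine jensen_step m hmpos g hgc hgnn p hp ((j:ℝ)/m) ?_
    have := pointwise_bound n P hP ((j:ℝ)/m)
    rw [hm]
    exact this
  -- continuity of sampled kernels
  have hWc : ∀ j : ℕ, Continuous (fun t : ℝ =>
      2 * Kk (2*m) ((j:ℝ)/m - t) + Kk m ((j:ℝ)/m - t)) := fun j =>
    (continuous_const.mul ((continuous_Kk _).comp (continuous_const.sub continuous_id))).add
      ((continuous_Kk _).comp (continuous_const.sub continuous_id))
  have hsum_le : (∑ j ∈ Finset.range m, g ((j:ℝ)/m) ^ p)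
      ≤ 3 ^ (p-1) * (8 * (m:ℝ) * I) := by
    calc (∑ j ∈ Finset.range m, g ((j:ℝ)/m) ^ p)
        ≤ ∑ j ∈ Finset.range m, (3 ^ (p-1) *
            ∫ t in Set.Ioc (0:ℝ) 1, g t ^ p *
              (2 * Kk (2*m) ((j:ℝ)/m - t) + Kk m ((j:ℝ)/m - t))) :=
          Finset.sum_le_sum hjen
      _ = 3 ^ (p-1) * ∑ j ∈ Finset.range m,
            ∫ t in Set.Ioc (0:ℝ) 1, g t ^ p *
              (2 * Kk (2*m) ((j:ℝ)/m - t) + Kk m ((j:ℝ)/m - t)) := by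
          rw [Finset.mul_sum]
      _ = 3 ^ (p-1) * ∫ t in Set.Ioc (0:ℝ) 1, ∑ j ∈ Finset.range m,
            g t ^ p * (2 * Kk (2*m) ((j:ℝ)/m - t) + Kk m ((j:ℝ)/m - t)) := by
          rw [MeasureTheory.integral_finset_sum _ (fun (j : ℕ) _ =>
            (show Continuous (fun t => g t ^ p * (2 * Kk (2*m) ((j:ℝ)/m - t) + Kk m ((j:ℝ)/m - t))) from hgp.mul (hWc j)).integrableOn_Ioc)]
      _ ≤ 3 ^ (p-1) * ∫ t in Set.Ioc (0:ℝ) 1, g t ^ p * (8 * (m:ℝ)) := by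
          apply mul_le_mul_of_nonneg_left _ (Real.rpow_nonneg (by norm_num) _)
          apply MeasureTheory.integral_mono
          · apply Continuous.integrableOn_Ioc
            apply continuous_finset_sum
            intro j _
            exact hgp.mul (hWc j)
          · exact (hgp.mul continuous_const).integrableOn_Ioc
          · intro t
            show (∑ j ∈ Finset.range m, g t ^ p *
                (2 * Kk (2*m) ((j:ℝ)/m - t) + Kk m ((j:ℝ)/m - t)))
              ≤ g t ^ p * (8 * (m:ℝ))
            rw [← Finset.mul_sum]
            apply mul_le_mul_of_nonneg_left _ (Real.rpow_nonneg (hgnn t) _)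
            have hsplit : (∑ j ∈ Finset.range m,
                (2 * Kk (2*m) ((j:ℝ)/m - t) + Kk m ((j:ℝ)/m - t)))
                = 2 * (∑ j ∈ Finset.range m, Kk (2*m) ((j:ℝ)/m - t))
                  + ∑ j ∈ Finset.range m, Kk m ((j:ℝ)/m - t) := by
              rw [Finset.sum_add_distrib, Finset.mul_sum]
            rw [hsplit]
            have h1 := sum_Kk_le m (2*m) hmpos (by omega) t
            have h2 := sum_Kk_le m m hmpos hmpos t
            have e1 : ((2*m)/m + 1 : ℕ) = 3 := by
              rw [Nat.mul_div_cancel _ hmpos]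
            have e2 : (m/m + 1 : ℕ) = 2 := by
              rw [Nat.div_self hmpos]
            rw [e1] at h1
            rw [e2] at h2
            have h1' : (∑ j ∈ Finset.range m, Kk (2*m) ((j:ℝ)/m - t)) ≤ (m:ℝ) * 3 := by
              exact_mod_cast h1
            have h2' : (∑ j ∈ Finset.range m, Kk m ((j:ℝ)/m - t)) ≤ (m:ℝ) * 2 := by
              exact_mod_cast h2
            linarith
      _ = 3 ^ (p-1) * (8 * (m:ℝ) * I) := by
          rw [MeasureTheory.integral_mul_const, hI]
          ring
  -- combine
  have hA : (1/((n:ℝ)+1)) * (∑ j ∈ Finset.range m, g ((j:ℝ)/m) ^ p)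
      ≤ 24 ^ p * I := by
    have hmn : ((n:ℝ)+1) = (m:ℝ) := by rw [hm]; push_cast; ring
    rw [hmn]
    have step1 : (1/(m:ℝ)) * (∑ j ∈ Finset.range m, g ((j:ℝ)/m) ^ p)
        ≤ (1/(m:ℝ)) * (3 ^ (p-1) * (8 * (m:ℝ) * I)) :=
      mul_le_mul_of_nonneg_left hsum_le (by positivity)
    have step2 : (1/(m:ℝ)) * (3 ^ (p-1) * (8 * (m:ℝ) * I)) = 3 ^ (p-1) * 8 * I := by
      field_simp
    have step3 : (3:ℝ) ^ (p-1) * 8 ≤ 24 ^ p := by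
      have h31 : (3:ℝ) ^ (p-1) ≤ 24 ^ (p-1) :=
        Real.rpow_le_rpow (by norm_num) (by norm_num) (by linarith)
      have h24 : (24:ℝ) ^ p = 24 ^ (p-1) * 24 := by
        have hh : (24:ℝ) ^ (p-1) * 24 ^ (1:ℝ) = 24 ^ p := by
          rw [← Real.rpow_add (by norm_num : (0:ℝ) < 24)]
          norm_num
        rw [← hh, Real.rpow_one]
      calc (3:ℝ) ^ (p-1) * 8 ≤ 24 ^ (p-1) * 24 := by
            have h0 : (0:ℝ) ≤ 24 ^ (p-1) := Real.rpow_nonneg (by norm_num) _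
            nlinarith [Real.rpow_nonneg (show (0:ℝ) ≤ 3 by norm_num) (p-1)]
        _ = 24 ^ p := h24.symm
    calc (1/(m:ℝ)) * (∑ j ∈ Finset.range m, g ((j:ℝ)/m) ^ p)
        ≤ 3 ^ (p-1) * 8 * I := by rw [← step2]; exact step1
      _ ≤ 24 ^ p * I := mul_le_mul_of_nonneg_right step3 hInn
  -- take (1/p) powers
  have hAnn : 0 ≤ (1/((n:ℝ)+1)) * (∑ j ∈ Finset.range m, g ((j:ℝ)/m) ^ p) := by
    apply mul_nonneg (by positivity)
    exact Finset.sum_nonneg fun j _ => Real.rpow_nonneg (hgnn _) _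
  have := Real.rpow_le_rpow hAnn hA (by positivity : (0:ℝ) ≤ 1/p)
  refine le_trans this ?_
  rw [Real.mul_rpow (Real.rpow_nonneg (by norm_num) _) hInn,
    ← Real.rpow_mul (by norm_num : (0:ℝ) ≤ 24), mul_one_div, div_self hp0.ne',
    Real.rpow_one]
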